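/- Let q ≥ 2, n ≥ 1, t ≥ 2, and let C : [M_1] × [M_2] → Q^n be a two-level code with d_1(C) > n(1 − 1/t²). Then for every nonempty coalition U ⊆ [M_1] × [M_2] with |U| ≤ t, every y ∈ E(C(U)), and every user u' whose group index G(u') does not belong to G(U) = {u_1 : (u_1,u_2) ∈ U}, there exists a coalition member u ∈ U with dist(C(u), y) < dist(C(u'), y); in particular no user from a group outside G(U) can minimize the distance to y. -/
import Mathlib

/-- Number of agreeing coordinates. -/
def agreeCount {q n : ℕ} (x y : Fin n → Fin q) : ℕ :=
  (Finset.univ.filter fun i => x i = y i).card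

lemma agree_add_dist {q n : ℕ} (x y : Fin n → Fin q) :
    agreeCount x y + hammingDist x y = n := by
  classical
  have := Finset.card_filter_add_card_filter_not
    (s := (Finset.univ : Finset (Fin n))) (p := fun i => x i = y i)
  simpa [agreeCount, hammingDist, Finset.card_univ] using this

/-- for a two-level code with `d₁(C) > n(1 − 1/t²)` (expressed over ℕ as
`n·(t² − 1) < t²·dist` for users in distinct groups), any coalition `U` of size at most `t`,
any forgery `y` in the envelope `E(C(U))`, and any user `u'` whose group is not among
the groups of `U`, some coalition member is strictly closer to `y` than `u'`;
in particular `u'` cannot minimize the distance to `y`. -/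
theorem stmt17 (q n t M₁ M₂ : ℕ) (hq : 2 ≤ q) (hn : 1 ≤ n) (ht : 2 ≤ t)
    (C : Fin M₁ × Fin M₂ → Fin n → Fin q)
    (hd1 : ∀ u v : Fin M₁ × Fin M₂, u.1 ≠ v.1 →
      n * (t ^ 2 - 1) < t ^ 2 * hammingDist (C u) (C v))
    (U : Finset (Fin M₁ × Fin M₂)) (hUne : U.Nonempty) (hUcard : U.card ≤ t)
    (y : Fin n → Fin q) (henv : ∀ l, ∃ u ∈ U, y l = C u l)
    (u' : Fin M₁ × Fin M₂) (hu' : u'.1 ∉ U.image Prod.fst) :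
    (∃ u ∈ U, hammingDist (C u) y < hammingDist (C u') y) ∧
    ¬ (∀ v : Fin M₁ × Fin M₂, hammingDist (C u') y ≤ hammingDist (C v) y) := by
  classical
  have ht0 : 0 < t := by omega
  -- group of u' differs from all coalition members
  have hne : ∀ u ∈ U, u'.1 ≠ u.1 := by
    intro u hu h
    exact hu' (Finset.mem_image.mpr ⟨u, hu, h.symm⟩)
  -- Step 1: sum of agreements with y over U covers all n coordinates
  have hcov : (Finset.univ : Finset (Fin n)) ⊆
      U.biUnion fun u => Finset.univ.filter fun i => C u i = y i := by
    intro i _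
    obtain ⟨u, hu, hyu⟩ := henv i
    exact Finset.mem_biUnion.mpr ⟨u, hu, Finset.mem_filter.mpr ⟨Finset.mem_univ _, hyu.symm⟩⟩
  have hsum1 : n ≤ ∑ u ∈ U, agreeCount (C u) y := by
    calc n = (Finset.univ : Finset (Fin n)).card := by simp
    _ ≤ (U.biUnion fun u => Finset.univ.filter fun i => C u i = y i).card :=
        Finset.card_le_card hcov
    _ ≤ ∑ u ∈ U, agreeCount (C u) y := Finset.card_biUnion_le
  -- Step 2: some u in U with n ≤ t * agreeCount (C u) y
  have hbest : ∃ u ∈ U, n ≤ t * agreeCount (C u) y := by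
    by_contra hno
    push_neg at hno
    have hle : ∑ u ∈ U, t * agreeCount (C u) y ≤ U.card * (n - 1) := by
      apply Finset.sum_le_card_nsmul
      intro u hu
      have := hno u hu
      omega
    have h2 : t * n ≤ ∑ u ∈ U, t * agreeCount (C u) y := by
      rw [← Finset.mul_sum]
      exact Nat.mul_le_mul_left t hsum1
    have h3 : U.card * (n - 1) ≤ t * (n - 1) := Nat.mul_le_mul_right _ hUcard
    have h4 : t * (n - 1) < t * n :=
      Nat.mul_lt_mul_of_le_of_lt (le_refl t) (by omega) ht0
    omega
  obtain ⟨u, hu, hbu⟩ := hbest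
  -- Step 3: agreements of u' with y are bounded
  have hkey : ∀ v ∈ U, t ^ 2 * agreeCount (C u') (C v) + 1 ≤ n := by
    intro v hv
    have hd := hd1 u' v (hne v hv)
    have hadd := agree_add_dist (C u') (C v)
    set A := agreeCount (C u') (C v) with hA
    set D := hammingDist (C u') (C v) with hD
    have hmul : t ^ 2 * A + t ^ 2 * D = t ^ 2 * n := by
      rw [← Nat.mul_add, hadd]
    have hnt : t ^ 2 * n = n * (t ^ 2 - 1) + n := by
      have : t ^ 2 * n = n * t ^ 2 := Nat.mul_comm _ _
      rw [this, ← Nat.mul_succ]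
      congr 1
      have : 1 ≤ t ^ 2 := Nat.one_le_pow _ _ ht0
      omega
    omega
  have hcov2 : (Finset.univ.filter fun i => C u' i = y i) ⊆
      U.biUnion fun v => Finset.univ.filter fun i => C u' i = C v i := by
    intro i hi
    have hi' := (Finset.mem_filter.mp hi).2
    obtain ⟨v, hv, hyv⟩ := henv i
    exact Finset.mem_biUnion.mpr ⟨v, hv,
      Finset.mem_filter.mpr ⟨Finset.mem_univ _, by rw [hi', hyv]⟩⟩
  have hsum2 : agreeCount (C u') y ≤ ∑ v ∈ U, agreeCount (C u') (C v) :=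
    le_trans (Finset.card_le_card hcov2) Finset.card_biUnion_le
  have hbound : t ^ 2 * agreeCount (C u') y ≤ t * (n - 1) := by
    calc t ^ 2 * agreeCount (C u') y
        ≤ t ^ 2 * ∑ v ∈ U, agreeCount (C u') (C v) := Nat.mul_le_mul_left _ hsum2
      _ = ∑ v ∈ U, t ^ 2 * agreeCount (C u') (C v) := Finset.mul_sum ..
      _ ≤ U.card * (n - 1) := by
          apply Finset.sum_le_card_nsmul
          intro v hv
          have := hkey v hv
          omega
      _ ≤ t * (n - 1) := Nat.mul_le_mul_right _ hUcard
  -- hence t * agreeCount (C u') y ≤ n - 1 < n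
  have hAu' : t * agreeCount (C u') y < n := by
    have h : t * (t * agreeCount (C u') y) ≤ t * (n - 1) := by
      have : t ^ 2 * agreeCount (C u') y = t * (t * agreeCount (C u') y) := by ring
      omega
    have := Nat.le_of_mul_le_mul_left h ht0
    omega
  -- conclude: dist (C u) y < dist (C u') y
  have hlt : hammingDist (C u) y < hammingDist (C u') y := by
    have ha := agree_add_dist (C u) y
    have hb := agree_add_dist (C u') y
    have hA : agreeCount (C u') y < agreeCount (C u) y := by
      have : t * agreeCount (C u') y < t * agreeCount (C u) y := lt_of_lt_of_le hAu' hbu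
      exact Nat.lt_of_mul_lt_mul_left this
    omega
  refine ⟨⟨u, hu, hlt⟩, fun hall => ?_⟩
  exact absurd (hall u) (not_le.mpr hlt)
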